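/- With $I_{n,m}$ as above (generated by all $x_S^2$, all $x_{\{i,j\}}x_{\{j,k\}}-x_{\{i,k\}}x_{\{j,k\}}$, and all tree monomials on $m+1$ vertices), for any cycle $C$ on distinct vertices $i_1,\dots,i_c$ in $[n]$ (with $c\ge 3$), the monomial $x_{\{i_1,i_2\}}x_{\{i_2,i_3\}}\cdots x_{\{i_{c-1},i_c\}}x_{\{i_c,i_1\}}$ lies in $I_{n,m}$. -/
import Mathlib


open MvPolynomial

/-- Variables indexed by 2-element subsets of `[n]`. -/
abbrev Idx (n : ℕ) := {S : Finset (Fin n) // S.card = 2}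

/-- The variable `x_{{i,j}}` (zero if `i = j`, but it is only used when `i ≠ j`). -/
noncomputable def XE {n : ℕ} (i j : Fin n) : MvPolynomial (Idx n) ℂ :=
  if h : i ≠ j then X ⟨{i, j}, Finset.card_pair h⟩ else 0

/-- Two vertices are joined by an edge of the edge set `E`. -/
def edgeRel {n : ℕ} (E : Finset (Idx n)) (i j : Fin n) : Prop :=
  ∃ S ∈ E, i ∈ S.1 ∧ j ∈ S.1 ∧ i ≠ j

/-- The vertex set of an edge set. -/
def vertexSet {n : ℕ} (E : Finset (Idx n)) : Finset (Fin n) :=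
  E.sup fun S => S.1

/-- `E` is the edge set of a tree: connected on its vertex set, with
(number of edges) + 1 = (number of vertices). -/
def IsTreeOn {n : ℕ} (E : Finset (Idx n)) : Prop :=
  (∀ i ∈ vertexSet E, ∀ j ∈ vertexSet E, Relation.ReflTransGen (edgeRel E) i j) ∧
    E.card + 1 = (vertexSet E).card

/-- The ideal `I_{n,m}`: generated by all squares `x_S^2`, all differences
`x_{{i,j}} x_{{j,k}} - x_{{i,k}} x_{{j,k}}`, and the monomials of all trees with
`m+1` vertices in `[n]`. -/
noncomputable def idealInm (n m : ℕ) : Ideal (MvPolynomial (Idx n) ℂ) :=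
  Ideal.span ({f | ∃ S : Idx n, f = X S ^ 2} ∪
    {f | ∃ i j k : Fin n, i ≠ j ∧ j ≠ k ∧ i ≠ k ∧ f = XE i j * XE j k - XE i k * XE j k} ∪
    {f | ∃ E : Finset (Idx n), IsTreeOn E ∧ (vertexSet E).card = m + 1 ∧ f = ∏ S ∈ E, X S})

lemma XE_symm {n : ℕ} (i j : Fin n) : XE i j = XE j i := by
  unfold XE
  rcases eq_or_ne i j with h | h
  · simp [h]
  · rw [dif_pos h, dif_pos h.symm]
    congr 1
    exact Subtype.ext (Finset.pair_comm i j)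

lemma sq_mem {n : ℕ} (m : ℕ) {i j : Fin n} (h : i ≠ j) : XE i j ^ 2 ∈ idealInm n m := by
  apply Ideal.subset_span
  left; left
  exact ⟨⟨{i, j}, Finset.card_pair h⟩, by simp [XE, h]⟩

lemma move_mem {n : ℕ} (m : ℕ) {i j k : Fin n} (hij : i ≠ j) (hjk : j ≠ k) (hik : i ≠ k) :
    XE i j * XE j k - XE i k * XE j k ∈ idealInm n m := by
  apply Ideal.subset_span
  left; right
  exact ⟨i, j, k, hij, hjk, hik, rfl⟩

lemma key_path (n m : ℕ) : ∀ t : ℕ, 1 ≤ t → ∀ w : ℕ → Fin n,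
    (∀ a ≤ t, ∀ b ≤ t, w a = w b → a = b) →
    (∏ k ∈ Finset.range t, XE (w k) (w (k + 1))) * XE (w t) (w 0) ∈ idealInm n m := by
  intro t
  induction t with
  | zero => omega
  | succ t ih =>
    intro _ w hw
    rcases Nat.eq_zero_or_pos t with rfl | ht
    · have h01 : w 0 ≠ w 1 := fun h => by
        have := hw 0 (by omega) 1 (by omega) h; omega
      have : (∏ k ∈ Finset.range 1, XE (w k) (w (k + 1))) * XE (w 1) (w 0)
          = XE (w 0) (w 1) ^ 2 := by
        rw [Finset.prod_range_one, XE_symm (w 1) (w 0), sq]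
      rw [this]
      exact sq_mem m h01
    · rw [Finset.prod_range_succ]
      set A := ∏ k ∈ Finset.range t, XE (w k) (w (k + 1)) with hA
      have h1 : w t ≠ w (t + 1) := fun h => by
        have := hw t (by omega) (t + 1) (by omega) h; omega
      have h2 : w (t + 1) ≠ w 0 := fun h => by
        have := hw (t + 1) (by omega) 0 (by omega) h; omega
      have h3 : w t ≠ w 0 := fun h => by
        have := hw t (by omega) 0 (by omega) h; omega
      have heq : A * XE (w t) (w (t + 1)) * XE (w (t + 1)) (w 0)
          = A * (XE (w t) (w (t + 1)) * XE (w (t + 1)) (w 0)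
              - XE (w t) (w 0) * XE (w (t + 1)) (w 0))
            + (A * XE (w t) (w 0)) * XE (w (t + 1)) (w 0) := by ring
      rw [heq]
      exact Ideal.add_mem _
        (Ideal.mul_mem_left _ _ (move_mem m h1 h2 h3))
        (Ideal.mul_mem_right _ _
          (ih ht w fun a ha b hb h => hw a (by omega) b (by omega) h))

theorem stmt17 (n m c : ℕ) (hn : 1 ≤ n) (hm : 1 ≤ m) (hc : 3 ≤ c)
    (v : Fin c → Fin n) (hv : Function.Injective v) :
    (∏ k : Fin c, XE (v k) (v (k + ⟨1, by omega⟩))) ∈ idealInm n m := by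
  obtain ⟨d, rfl⟩ : ∃ d, c = d + 1 := ⟨c - 1, by omega⟩
  have hd : 2 ≤ d := by omega
  set w : ℕ → Fin n := fun k => v ⟨k % (d + 1), Nat.mod_lt _ (by omega)⟩ with hw
  have hprod : (∏ k : Fin (d + 1), XE (v k) (v (k + ⟨1, by omega⟩)))
      = ∏ k ∈ Finset.range (d + 1), XE (w k) (w (k + 1)) := by
    rw [← Fin.prod_univ_eq_prod_range (fun k => XE (w k) (w (k + 1))) (d + 1)]
    apply Finset.prod_congr rfl
    intro k _
    have e1 : w (k : ℕ) = v k := by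
      show v _ = v k
      congr 1
      exact Fin.ext (Nat.mod_eq_of_lt k.isLt)
    have e2 : w ((k : ℕ) + 1) = v (k + ⟨1, by omega⟩) := by
      show v _ = v _
      congr 1
    rw [e1, e2]
  rw [hprod, Finset.prod_range_succ]
  have hwd : w (d + 1) = w 0 := by
    show v _ = v _
    congr 1
    exact Fin.ext (by simp)
  rw [hwd]
  apply key_path n m d (by omega) w
  intro a ha b hb h
  have h2 : a % (d + 1) = b % (d + 1) := by
    have h3 : (⟨a % (d + 1), Nat.mod_lt _ (by omega)⟩ : Fin (d + 1))
        = ⟨b % (d + 1), Nat.mod_lt _ (by omega)⟩ := hv h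
    exact congrArg Fin.val h3
  rwa [Nat.mod_eq_of_lt (by omega), Nat.mod_eq_of_lt (by omega)] at h2
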